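/- For each k ∈ {0,1,2,3} and every natural number p > 0, the Cayley–Dickson twist satisfies ω_k(p,p) = −1. -/

import Mathlib

/-- The five states of the Cayley–Dickson twist tree:
corner (C), top (T), left (L), diagonal (D) and interior (I). -/
inductive TwistState : Type
  | C | T | L | D | I
deriving DecidableEq

open TwistState

/-- The interior-node sign `i_k(a,b)` for the doubling product `P_k`, `k ∈ {0,1,2,3}`. -/
def iTwist (k : ℕ) (a b : Bool) : ℤ :=
  match k with
  | 0 => if a = false ∧ b = false then -1 else 1
  | 1 => -1
  | 2 => 1
  | _ => if a = false ∧ b = false then 1 else -1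

/-- One step of the twist-tree finite-state computation: from the current
(state, sign) pair, read a doublet of bits `(a, b)` and move to the new
(state, sign) pair. -/
def twistStep (k : ℕ) : TwistState × ℤ → Bool × Bool → TwistState × ℤ
  | (C, s), (false, false) => (C, s)
  | (C, s), (false, true)  => (T, s)
  | (C, s), (true, false)  => (L, s)
  | (C, s), (true, true)   => (D, -s)
  | (T, s), (false, false) => (T, s)
  | (T, s), (false, true)  => (T, s)
  | (T, s), (true, false)  => (I, s)
  | (T, s), (true, true)   => (I, -s)
  | (L, s), (false, false) => (L, s)
  | (L, s), (false, true)  => (I, -s)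
  | (L, s), (true, false)  => (L, s)
  | (L, s), (true, true)   => (I, s)
  | (D, s), (false, false) => (D, s)
  | (D, s), (false, true)  => (I, -s)
  | (D, s), (true, false)  => (I, s)
  | (D, s), (true, true)   => (D, s)
  | (I, s), (a, b)         => (I, s * iTwist k a b)

/-- The Cayley–Dickson twist `ω_k(p,q)` for the doubling product `P_k`:
write `p` and `q` in binary with a common number of bits (padding with
leading zeros), read the doublets of bits from most significant to least
significant, running the twist-tree automaton starting at state `C` with
sign `+1`; the result is the final sign. -/
def omegaTwist (k : ℕ) (p q : ℕ) : ℤ :=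
  (((List.range (max (Nat.size p) (Nat.size q))).reverse.map
      (fun i => (p.testBit i, q.testBit i))).foldl (twistStep k) (C, 1)).2

lemma diag_fold (k : ℕ) : ∀ l : List (Bool × Bool), (∀ x ∈ l, x.1 = x.2) →
    l.foldl (twistStep k) (D, -1) = (D, -1) := by
  intro l
  induction l with
  | nil => intro _; rfl
  | cons x xs ih =>
    intro h
    have hx : x.1 = x.2 := h x List.mem_cons_self
    obtain ⟨a, b⟩ := x
    simp only at hx
    subst hx
    cases a <;>
      · simp only [List.foldl_cons, twistStep]
        exact ih fun y hy => h y (List.mem_cons_of_mem _ hy)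

lemma testBit_size_sub_one {p : ℕ} (hp : 0 < p) : p.testBit (p.size - 1) = true := by
  have hn : 0 < p.size := Nat.size_pos.mpr hp
  have h1 : 2 ^ (p.size - 1) ≤ p := Nat.lt_size.mp (by omega)
  have h2 : p < 2 ^ (p.size - 1 + 1) := by
    have := Nat.lt_size_self p
    have : p.size - 1 + 1 = p.size := by omega
    rw [this]; exact Nat.lt_size_self p
  have hdiv : p / 2 ^ (p.size - 1) = 1 := by
    have hle : 1 ≤ p / 2 ^ (p.size - 1) := (Nat.one_le_div_iff (Nat.pow_pos two_pos)).mpr h1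
    have hlt : p / 2 ^ (p.size - 1) < 2 := Nat.div_lt_of_lt_mul (by rw [pow_succ] at h2; omega)
    omega
  rw [Nat.testBit_eq_decide_div_mod_eq, hdiv]
  decide

/-- For each `k ∈ {0,1,2,3}` and every natural number `p > 0`, the
Cayley–Dickson twist satisfies `ω_k(p,p) = -1`. -/
theorem omegaTwist_self :
    ∀ k ∈ ({0, 1, 2, 3} : Finset ℕ), ∀ p : ℕ, 0 < p →
      omegaTwist k p p = -1 := by
  intro k _ p hp
  unfold omegaTwist
  have hn : 0 < p.size := Nat.size_pos.mpr hp
  rw [max_self]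
  obtain ⟨m, hm⟩ : ∃ m, p.size = m + 1 := ⟨p.size - 1, by omega⟩
  rw [hm, List.range_succ, List.reverse_append]
  simp only [List.reverse_singleton, List.singleton_append, List.map_cons, List.foldl_cons]
  have hbit : p.testBit m = true := by
    have := testBit_size_sub_one hp
    rwa [hm, Nat.add_sub_cancel] at this
  rw [hbit]
  have : twistStep k (C, 1) (true, true) = (D, -1) := rfl
  rw [this, diag_fold]
  intro x hx
  simp only [List.mem_map] at hx
  obtain ⟨i, _, rfl⟩ := hx
  rfl
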